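/- For d×d symmetric positive semidefinite matrices X with Ran(C) ⊆ Ran(X) for a fixed symmetric positive semidefinite matrix C, the function X ↦ Tr(X† C) + Tr(X) is minimized at X* = C^{1/2}, with minimum value 2 Tr(C^{1/2}) = 2‖C^{1/2}‖_*. -/

import Mathlib

open Matrix

/-- The square root of a positive semidefinite matrix, as defined in the older Mathlib
(`Matrix.PosSemidef.sqrt`, since removed). -/
noncomputable def Matrix.PosSemidef.sqrt {n : Type*} [Fintype n] [DecidableEq n] {𝕜 : Type*} [RCLike 𝕜] [PartialOrder 𝕜] [StarOrderedRing 𝕜]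
    {A : Matrix n n 𝕜} (hA : A.PosSemidef) : Matrix n n 𝕜 :=
  hA.1.eigenvectorUnitary.1 * diagonal ((↑) ∘ (Real.sqrt ∘ hA.1.eigenvalues)) *
    (star hA.1.eigenvectorUnitary : Matrix n n 𝕜)

/-- The four Penrose conditions characterizing the Moore–Penrose pseudoinverse `B` of `A`. -/
def IsMoorePenrose {d : ℕ} (A B : Matrix (Fin d) (Fin d) ℝ) : Prop :=
  A * B * A = A ∧ B * A * B = B ∧ (A * B)ᵀ = A * B ∧ (B * A)ᵀ = B * A

lemma psd_sqrt_mul_self {d : ℕ} {C : Matrix (Fin d) (Fin d) ℝ} (hC : C.PosSemidef) :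
    Matrix.PosSemidef.sqrt hC * Matrix.PosSemidef.sqrt hC = C := by
  have hU : (star hC.1.eigenvectorUnitary : Matrix (Fin d) (Fin d) ℝ) * hC.1.eigenvectorUnitary = 1 :=
    Unitary.star_mul_self_of_mem hC.1.eigenvectorUnitary.2
  unfold Matrix.PosSemidef.sqrt
  conv_rhs => rw [hC.1.spectral_theorem, Unitary.conjStarAlgAut_apply]
  rw [show ∀ a b c : Matrix (Fin d) (Fin d) ℝ, a * b * c * (a * b * c) = a * b * (c * a) * b * c by
    intro a b c; noncomm_ring, hU, mul_one, Matrix.mul_assoc _ (diagonal _) (diagonal _), diagonal_mul_diagonal]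
  congr 2
  ext i j
  by_cases h : i = j <;> simp [diagonal_apply, h, Real.mul_self_sqrt (hC.eigenvalues_nonneg _)]

lemma psd_sqrt_symm {d : ℕ} {C : Matrix (Fin d) (Fin d) ℝ} (hC : C.PosSemidef) :
    (Matrix.PosSemidef.sqrt hC)ᵀ = Matrix.PosSemidef.sqrt hC := by
  rw [← conjTranspose_eq_transpose_of_trivial]
  unfold Matrix.PosSemidef.sqrt
  simp only [conjTranspose_mul, diagonal_conjTranspose, star_eq_conjTranspose,
    conjTranspose_conjTranspose, Matrix.mul_assoc]
  rw [star_trivial]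

lemma mp_unique {d : ℕ} {A B1 B2 : Matrix (Fin d) (Fin d) ℝ}
    (h1 : IsMoorePenrose A B1) (h2 : IsMoorePenrose A B2) : B1 = B2 := by
  obtain ⟨a1, b1, c1, d1⟩ := h1
  obtain ⟨a2, b2, c2, d2⟩ := h2
  have hAB : A * B1 = A * B2 := by
    calc A * B1 = (A * B1)ᵀ := c1.symm
      _ = B1ᵀ * Aᵀ := transpose_mul _ _
      _ = B1ᵀ * (A * B2 * A)ᵀ := by rw [a2]
      _ = B1ᵀ * (Aᵀ * (B2ᵀ * Aᵀ)) := by rw [transpose_mul, transpose_mul]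
      _ = (B1ᵀ * Aᵀ) * (B2ᵀ * Aᵀ) := by noncomm_ring
      _ = (A * B1)ᵀ * (A * B2)ᵀ := by rw [transpose_mul, transpose_mul]
      _ = (A * B1) * (A * B2) := by rw [c1, c2]
      _ = (A * B1 * A) * B2 := by noncomm_ring
      _ = A * B2 := by rw [a1]
  have hBA : B1 * A = B2 * A := by
    calc B1 * A = (B1 * A)ᵀ := d1.symm
      _ = Aᵀ * B1ᵀ := transpose_mul _ _
      _ = (A * B2 * A)ᵀ * B1ᵀ := by rw [a2]
      _ = (Aᵀ * (B2ᵀ * Aᵀ)) * B1ᵀ := by rw [transpose_mul, transpose_mul]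
      _ = (Aᵀ * B2ᵀ) * (Aᵀ * B1ᵀ) := by noncomm_ring
      _ = (B2 * A)ᵀ * (B1 * A)ᵀ := by rw [transpose_mul, transpose_mul]
      _ = (B2 * A) * (B1 * A) := by rw [d1, d2]
      _ = B2 * (A * B1 * A) := by noncomm_ring
      _ = B2 * A := by rw [a1]
  calc B1 = B1 * A * B1 := b1.symm
    _ = B2 * A * B1 := by rw [hBA]
    _ = B2 * (A * B1) := by rw [mul_assoc]
    _ = B2 * (A * B2) := by rw [hAB]
    _ = B2 := by rw [← mul_assoc, b2]

lemma mp_transpose {d : ℕ} {A B : Matrix (Fin d) (Fin d) ℝ}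
    (h : IsMoorePenrose A B) : IsMoorePenrose Aᵀ Bᵀ := by
  obtain ⟨a, b, c, d'⟩ := h
  refine ⟨?_, ?_, ?_, ?_⟩
  · simp only [← transpose_mul]
    rw [← mul_assoc, a]
  · simp only [← transpose_mul]
    rw [← mul_assoc, b]
  · simp only [← transpose_mul, transpose_transpose]
    exact d'.symm
  · simp only [← transpose_mul, transpose_transpose]
    exact c.symm

lemma mp_symm {d : ℕ} {A B : Matrix (Fin d) (Fin d) ℝ} (hA : Aᵀ = A)
    (h : IsMoorePenrose A B) : Bᵀ = B := by
  have := mp_transpose h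
  rw [hA] at this
  exact mp_unique this h

lemma trace_nonneg_of_psd {d : ℕ} {M : Matrix (Fin d) (Fin d) ℝ}
    (hM : M.PosSemidef) : 0 ≤ M.trace := by
  rw [Matrix.trace]
  apply Finset.sum_nonneg
  intro i _
  have := hM.dotProduct_mulVec_nonneg (Pi.single i 1)
  simpa [dotProduct, Matrix.mulVec, Pi.single_apply, Matrix.diag] using this

lemma eq_zero_of_trace_mul_transpose {d : ℕ} {M : Matrix (Fin d) (Fin d) ℝ}
    (h : (M * Mᵀ).trace = 0) : M = 0 := by
  have hsum : ∑ i, ∑ j, M i j * M i j = 0 := by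
    simpa [Matrix.trace, Matrix.diag, Matrix.mul_apply, Matrix.transpose_apply] using h
  ext i j
  have h1 : ∀ i ∈ Finset.univ, (0:ℝ) ≤ ∑ j, M i j * M i j :=
    fun i _ => Finset.sum_nonneg fun j _ => mul_self_nonneg _
  have h2 := (Finset.sum_eq_zero_iff_of_nonneg h1).mp hsum i (Finset.mem_univ i)
  have h3 := (Finset.sum_eq_zero_iff_of_nonneg
    (fun j _ => mul_self_nonneg (M i j))).mp h2 j (Finset.mem_univ j)
  have := mul_self_eq_zero.mp h3
  simpa using this

/-- For symmetric positive semidefinite `X` with `Ran C ⊆ Ran X` (`C` a fixed symmetric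
positive semidefinite matrix), the function `X ↦ Tr(X† C) + Tr(X)` is minimized at
`X* = C^{1/2}`, with minimum value `2 Tr(C^{1/2})`. -/
theorem stmt2 {d : ℕ} (C : Matrix (Fin d) (Fin d) ℝ) (hC : C.PosSemidef) :
    (∀ X Xdag : Matrix (Fin d) (Fin d) ℝ, X.PosSemidef → IsMoorePenrose X Xdag →
        LinearMap.range C.mulVecLin ≤ LinearMap.range X.mulVecLin →
        2 * (Matrix.PosSemidef.sqrt hC).trace ≤ (Xdag * C).trace + X.trace) ∧
    (∀ Xstardag : Matrix (Fin d) (Fin d) ℝ, IsMoorePenrose (Matrix.PosSemidef.sqrt hC) Xstardag →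
        (Xstardag * C).trace + (Matrix.PosSemidef.sqrt hC).trace = 2 * (Matrix.PosSemidef.sqrt hC).trace) := by
  set S := Matrix.PosSemidef.sqrt hC with hSdef
  have hSS : S * S = C := psd_sqrt_mul_self hC
  have hSsym : Sᵀ = S := psd_sqrt_symm hC
  constructor
  · intro X Xdag hX hMP hrange
    obtain ⟨p1, p2, p3, p4⟩ := hMP
    have hXsym : Xᵀ = X := hX.isHermitian
    have hXdagsym : Xdagᵀ = Xdag := mp_symm hXsym ⟨p1, p2, p3, p4⟩
    -- Xdag is PSD
    have hXdagPSD : Xdag.PosSemidef := by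
      have : Xdag = Xdagᵀ * X * Xdag := by rw [hXdagsym, p2]
      rw [this, ← conjTranspose_eq_transpose_of_trivial]
      exact hX.conjTranspose_mul_mul_same Xdag
    set P := X * Xdag with hPdef
    have hPsym : Pᵀ = P := p3
    have hPX : P * X = X := p1
    -- P C = C via the range condition
    have key : ∀ v, P *ᵥ (C *ᵥ v) = C *ᵥ v := by
      intro v
      obtain ⟨w, hw⟩ := hrange ⟨v, rfl⟩
      simp only [Matrix.mulVecLin_apply] at hw
      rw [← hw, Matrix.mulVec_mulVec, hPX]
    have hPC : P * C = C := by
      ext i j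
      have := congrFun (key (Pi.single j 1)) i
      simpa [Matrix.mulVec_mulVec, Matrix.mulVec_single, Matrix.mul_apply, Matrix.mulVec, dotProduct, Pi.single_apply] using this
    -- P S = S via trace trick
    have hPS : P * S = S := by
      have hPP : P * P = P := by
        calc P * P = (X * Xdag * X) * Xdag := by rw [hPdef]; noncomm_ring
          _ = X * Xdag := by rw [p1]
        -- = P
      have hCsym : Cᵀ = C := hC.isHermitian
      have hCP : C * P = C := by
        have := congrArg Matrix.transpose hPC
        rwa [transpose_mul, hPsym, hCsym] at this
      have hM : (P * S - S) * (P * S - S)ᵀ = 0 := by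
        have expand : (P * S - S) * (P * S - S)ᵀ
            = P * (S * S) * Pᵀ - P * (S * S) - (S * S) * Pᵀ + S * S := by
          rw [transpose_sub, transpose_mul, hSsym]
          noncomm_ring
        rw [expand, hSS, hPsym, hPC, hCP]
        abel
      have := eq_zero_of_trace_mul_transpose (by rw [hM, Matrix.trace_zero])
      have := sub_eq_zero.mp this
      exact this
    have hXdagX : Xdag * X = P := by
      rw [← p4, hPdef, transpose_mul, hXdagsym, hXsym]
    -- key identity and PSD residual
    have hres : ((S - X)ᵀ * Xdag * (S - X)).PosSemidef := by
      rw [← conjTranspose_eq_transpose_of_trivial]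
      exact hXdagPSD.conjTranspose_mul_mul_same (S - X)
    have htr : ((S - X)ᵀ * Xdag * (S - X)).trace
        = (Xdag * C).trace + X.trace - 2 * S.trace := by
      have hexpand : (S - X)ᵀ * Xdag * (S - X)
          = S * Xdag * S - S * Xdag * X - X * Xdag * S + X * Xdag * X := by
        rw [transpose_sub, hSsym, hXsym]
        noncomm_ring
      have h1 : (S * Xdag * S).trace = (Xdag * C).trace := by
        calc (S * Xdag * S).trace = (S * (S * Xdag)).trace := Matrix.trace_mul_comm _ _
          _ = ((S * S) * Xdag).trace := by rw [← mul_assoc]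
          _ = (Xdag * (S * S)).trace := Matrix.trace_mul_comm _ _
          _ = (Xdag * C).trace := by rw [hSS]
      have h2 : (S * Xdag * X).trace = S.trace := by
        rw [mul_assoc, hXdagX, Matrix.trace_mul_comm, hPS]
      have h3 : (X * Xdag * S).trace = S.trace := by
        rw [← hPdef, hPS]
      have h4 : (X * Xdag * X).trace = X.trace := by rw [p1]
      rw [hexpand, Matrix.trace_add, Matrix.trace_sub, Matrix.trace_sub, h1, h2, h3, h4]
      ring
    have := trace_nonneg_of_psd hres
    rw [htr] at this
    linarith
  · intro B hB
    obtain ⟨p1, _, _, _⟩ := hB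
    have h1 : (B * C).trace = S.trace := by
      calc (B * C).trace = (B * (S * S)).trace := by rw [hSS]
        _ = ((B * S) * S).trace := by rw [mul_assoc]
        _ = (S * (B * S)).trace := Matrix.trace_mul_comm _ _
        _ = (S * B * S).trace := by rw [mul_assoc]
        _ = S.trace := by rw [p1]
    rw [h1]; ring
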